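/- Let εK, εN > 0 satisfy e^{−εK} + e^{−εN} > 1. Consider minimizing KL(μK ‖ μN) over pairs (μK, μN) of Borel probability measures on [0,1] subject to the constraints E_{X∼μK}[−ln X] ≤ εK and E_{X∼μN}[−ln(1−X)] ≤ εN. Then the unique minimizing pair is μK* = δ_{x*} (the Dirac measure at x*) and μN* = (1−q*)·δ_0 + q*·δ_{x*}, where x* = e^{−εK} and q* = εN / (−ln(1−x*)). -/

import Mathlib

/- STATEMENT 11: Under log-loss constraints E_{μK}[−ln X] ≤ εK and E_{μN}[−ln(1−X)] ≤ εN,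
   in the non-trivial regime εK, εN > 0 with e^{−εK} + e^{−εN} > 1, the unique minimizer
   of KL(μK ‖ μN) is μK* = δ_{x*}, μN* = (1−q*)·δ_0 + q*·δ_{x*},
   with x* = e^{−εK} and q* = εN / (−ln(1−x*)). -/

open MeasureTheory Filter Topology
open scoped ENNReal

abbrev I01 : Set ℝ := Set.Icc 0 1

open Classical in
/-- Kullback–Leibler divergence (base 2; the minimizers do not depend on the base),
valued in `EReal`, equal to `⊤` when absolute continuity fails. -/
noncomputable def klDiv2 {α : Type*} [MeasurableSpace α] (μ ν : Measure α) : EReal :=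
  if μ ≪ ν ∧ Integrable (fun x => Real.logb 2 ((μ.rnDeriv ν x).toReal)) μ
  then ((∫ x, Real.logb 2 ((μ.rnDeriv ν x).toReal) ∂μ : ℝ) : EReal)
  else ⊤

open Classical in
/-- The log-loss error metric on keys: `d^K(x) = −ln x`, with `−ln 0 = +∞`. -/
noncomputable def dLogK (x : I01) : ℝ≥0∞ :=
  if (x : ℝ) = 0 then ⊤ else ENNReal.ofReal (-Real.log (x : ℝ))

open Classical in
/-- The log-loss error metric on non-keys: `d^N(x) = −ln(1−x)`, with `−ln 0 = +∞`. -/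
noncomputable def dLogN (x : I01) : ℝ≥0∞ :=
  if (x : ℝ) = 1 then ⊤ else ENNReal.ofReal (-Real.log (1 - (x : ℝ)))

/-- Feasibility for the log-loss constraints. -/
def FeasLog (εK εN : ℝ) (μK μN : Measure I01) : Prop :=
  IsProbabilityMeasure μK ∧ IsProbabilityMeasure μN ∧
    (∫⁻ x, dLogK x ∂μK) ≤ ENNReal.ofReal εK ∧ (∫⁻ x, dLogN x ∂μN) ≤ ENNReal.ofReal εN

/-! ### auxiliary real analysis -/

lemma aux1 {x : ℝ} (hx0 : 0 < x) (hx1 : x < 1) : (1-x) * (-Real.log (1-x)) < x := by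
  have h1x : 0 < 1 - x := by linarith
  have h := Real.log_lt_sub_one_of_pos (x := (1-x)⁻¹) (by positivity)
    (by
      intro h
      have : (1:ℝ) - x = 1 := by
        field_simp at h
        linarith
      linarith)
  rw [Real.log_inv] at h
  have h2 : -Real.log (1-x) < (1-x)⁻¹ - 1 := h
  calc (1-x) * (-Real.log (1-x)) < (1-x) * ((1-x)⁻¹ - 1) := by
        apply mul_lt_mul_of_pos_left h2 h1x
    _ = 1 - (1-x) := by field_simp
    _ = x := by ring

lemma chord (x t a β : ℝ) (hx0 : 0 < x) (hx1 : x < 1)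
    (ht : t = -Real.log (1-x)) (ha : a = x/((1-x)*t)) (hβ : β = x^a/t)
    {y : ℝ} (hy0 : 0 ≤ y) (hy1 : y < 1) :
    y^a ≤ β * (-Real.log (1-y)) ∧ (0 < y → y ≠ x → y^a < β * (-Real.log (1-y))) := by
  have h1x : 0 < 1 - x := by linarith
  have ht0 : 0 < t := by
    rw [ht]; exact neg_pos.2 (Real.log_neg h1x (by linarith))
  have ha1 : 1 < a := by
    rw [ha, lt_div_iff₀ (by positivity), ht]
    have := aux1 hx0 hx1
    linarith
  have ha0 : 0 < a := by linarith
  have htx : x < t := by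
    rw [ht]
    have := Real.log_lt_sub_one_of_pos h1x (by intro h; linarith)
    linarith
  have haxt : a * (1-x) = x / t := by
    rw [ha]; field_simp
  have hax1 : a * (1-x) < 1 := by
    rw [haxt]; exact (div_lt_one ht0).2 htx
  set c : ℝ := (a-1)/a with hc
  have hc0 : 0 < c := div_pos (by linarith) ha0
  have hcx : c < x := by
    rw [hc, div_lt_iff₀ ha0]
    nlinarith
  have hc1 : c < 1 := lt_trans hcx hx1
  have hβ0 : 0 < β := by rw [hβ]; positivity
  set m : ℝ → ℝ := fun y => a * y^(a-1) * (1-y) with hm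
  have hxx : x^a = x^(a-1) * x := by
    rw [show a = (a-1)+1 by ring, Real.rpow_add hx0, Real.rpow_one]
    ring_nf
  have hmx : m x = β := by
    show a * x^(a-1) * (1-x) = β
    rw [hβ]
    calc a * x^(a-1) * (1-x) = (a*(1-x)) * x^(a-1) := by ring
      _ = (x/t) * x^(a-1) := by rw [haxt]
      _ = (x^(a-1) * x)/t := by ring
      _ = x^a/t := by rw [← hxx]
  have hm0 : m 0 = 0 := by
    show a * (0:ℝ)^(a-1) * (1-0) = 0
    rw [Real.zero_rpow (by linarith)]; ring
  have hmc : ∀ z : ℝ, 0 ≤ z → ContinuousAt m z := by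
    intro z hz
    have h1 : ContinuousAt (fun y : ℝ => y ^ (a-1)) z := by
      rcases eq_or_lt_of_le hz with h | h
      · exact Real.continuousAt_rpow_const z (a-1) (Or.inr (by linarith))
      · exact Real.continuousAt_rpow_const z (a-1) (Or.inl h.ne')
    exact (continuousAt_const.mul h1).mul (continuousAt_const.sub continuousAt_id)
  have hmderiv : ∀ z : ℝ, 0 < z → HasDerivAt m (a * ((a-1) * z^(a-1-1)) * (1-z) + a * z^(a-1) * (-1)) z := by
    intro z hz
    have h1 : HasDerivAt (fun y : ℝ => a * y^(a-1)) (a * ((a-1) * z^(a-1-1))) z :=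
      (Real.hasDerivAt_rpow_const (Or.inl hz.ne')).const_mul a
    have h2 : HasDerivAt (fun y : ℝ => 1 - y) (-1) z := by
      simpa using (hasDerivAt_id z).const_sub 1
    exact h1.mul h2
  have hmderiv_sign : ∀ z : ℝ, 0 < z →
      (a * ((a-1) * z^(a-1-1)) * (1-z) + a * z^(a-1) * (-1)) = a * z^(a-1-1) * ((a-1) - a*z) := by
    intro z hz
    have : z^(a-1) = z^(a-1-1) * z := by
      nth_rewrite 1 [show a-1 = (a-1-1) + 1 by ring]
      rw [Real.rpow_add hz, Real.rpow_one]
    rw [this]; ring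
  have hm_mono : StrictMonoOn m (Set.Icc 0 c) := by
    apply strictMonoOn_of_deriv_pos (convex_Icc 0 c)
    · exact fun z hz => (hmc z hz.1).continuousWithinAt
    · intro z hz
      rw [interior_Icc] at hz
      obtain ⟨hz1, hz2⟩ := hz
      rw [(hmderiv z hz1).deriv, hmderiv_sign z hz1]
      have h1 : 0 < (a-1) - a*z := by
        have : z < (a-1)/a := hz2
        rw [lt_div_iff₀ ha0] at this
        linarith
      have h2 : (0:ℝ) < z^(a-1-1) := Real.rpow_pos_of_pos hz1 _
      positivity
  have hm_anti : StrictAntiOn m (Set.Icc c 1) := by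
    apply strictAntiOn_of_deriv_neg (convex_Icc c 1)
    · exact fun z hz => (hmc z (le_trans hc0.le hz.1)).continuousWithinAt
    · intro z hz
      rw [interior_Icc] at hz
      obtain ⟨hz1, hz2⟩ := hz
      have hz0 : 0 < z := lt_trans hc0 hz1
      rw [(hmderiv z hz0).deriv, hmderiv_sign z hz0]
      have h1 : (a-1) - a*z < 0 := by
        have : (a-1)/a < z := hz1
        rw [div_lt_iff₀ ha0] at this
        linarith
      have h2 : (0:ℝ) < z^(a-1-1) := Real.rpow_pos_of_pos hz0 _
      exact mul_neg_of_pos_of_neg (mul_pos ha0 h2) h1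
  have hmcβ : β < m c := by
    have := hm_anti (Set.left_mem_Icc.2 hc1.le) ⟨hcx.le, hx1.le⟩ hcx
    rw [hmx] at this; exact this
  obtain ⟨y₁, hy₁mem, hy₁⟩ : ∃ y₁ ∈ Set.Icc (0:ℝ) c, m y₁ = β := by
    have h := intermediate_value_Icc hc0.le (fun z hz => (hmc z hz.1).continuousWithinAt)
    have hmem : β ∈ Set.Icc (m 0) (m c) := ⟨by rw [hm0]; exact hβ0.le, hmcβ.le⟩
    obtain ⟨y₁, h1, h2⟩ := h hmem
    exact ⟨y₁, h1, h2⟩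
  have hy₁0 : 0 < y₁ := by
    rcases eq_or_lt_of_le hy₁mem.1 with h | h
    · exfalso; rw [← h, hm0] at hy₁; linarith
    · exact h
  have hy₁c : y₁ < c := by
    rcases eq_or_lt_of_le hy₁mem.2 with h | h
    · exfalso; rw [h] at hy₁; linarith
    · exact h
  have hy₁x : y₁ < x := lt_trans hy₁c hcx
  set F : ℝ → ℝ := fun y => β * (-Real.log (1-y)) - y^a with hF
  have hFc : ∀ z : ℝ, 0 ≤ z → z < 1 → ContinuousAt F z := by
    intro z hz hz1
    have h1 : ContinuousAt (fun y : ℝ => y ^ a) z := by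
      rcases eq_or_lt_of_le hz with h | h
      · exact Real.continuousAt_rpow_const z a (Or.inr ha0.le)
      · exact Real.continuousAt_rpow_const z a (Or.inl h.ne')
    have h2 : ContinuousAt (fun y : ℝ => Real.log (1-y)) z :=
      (Real.continuousAt_log (by intro h; linarith)).comp
        (continuousAt_const.sub continuousAt_id)
    exact (continuousAt_const.mul h2.neg).sub h1
  have hFderiv : ∀ z : ℝ, 0 < z → z < 1 →
      HasDerivAt F (β * (1-z)⁻¹ - a * z^(a-1)) z := by
    intro z hz hz1
    have h1z : (1:ℝ) - z ≠ 0 := by intro h; linarith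
    have hsub : HasDerivAt (fun y : ℝ => 1 - y) (-1) z := by
      simpa using (hasDerivAt_id z).const_sub 1
    have h1 : HasDerivAt (fun y : ℝ => Real.log (1-y)) (-1 / (1-z)) z := hsub.log h1z
    have h2 : HasDerivAt (fun y : ℝ => y ^ a) (a * z^(a-1)) z :=
      Real.hasDerivAt_rpow_const (Or.inl hz.ne')
    have h3 := (h1.neg.const_mul β).sub h2
    have heq : β * -(-1 / (1-z)) - a*z^(a-1) = β * (1-z)⁻¹ - a * z^(a-1) := by
      field_simp
    rw [heq] at h3
    exact h3
  have hFderiv_sign : ∀ z : ℝ, 0 < z → z < 1 →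
      β * (1-z)⁻¹ - a * z^(a-1) = (β - m z) / (1-z) := by
    intro z hz hz1
    have h1z : (0:ℝ) < 1 - z := by linarith
    show β * (1-z)⁻¹ - a * z^(a-1) = (β - a * z^(a-1) * (1-z)) / (1-z)
    field_simp
  have hF0 : F 0 = 0 := by
    show β * (-Real.log (1-0)) - (0:ℝ)^a = 0
    rw [Real.zero_rpow ha0.ne']
    simp
  have hFx : F x = 0 := by
    show β * (-Real.log (1-x)) - x^a = 0
    rw [← ht, hβ]
    field_simp
    ring
  have hF_mono1 : StrictMonoOn F (Set.Icc 0 y₁) := by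
    apply strictMonoOn_of_deriv_pos (convex_Icc 0 y₁)
    · exact fun z hz => (hFc z hz.1 (by
        have := hz.2; linarith [hy₁x, hx1])).continuousWithinAt
    · intro z hz
      rw [interior_Icc] at hz
      obtain ⟨hz1, hz2⟩ := hz
      have hzlt1 : z < 1 := by linarith [hy₁x, hx1]
      rw [(hFderiv z hz1 hzlt1).deriv, hFderiv_sign z hz1 hzlt1]
      have hmz : m z < β := by
        rw [← hy₁]
        exact hm_mono ⟨hz1.le, by linarith [hy₁c]⟩ hy₁mem hz2
      exact div_pos (by linarith) (by linarith)
  have hF_anti : StrictAntiOn F (Set.Icc y₁ x) := by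
    apply strictAntiOn_of_deriv_neg (convex_Icc y₁ x)
    · exact fun z hz => (hFc z (le_trans hy₁0.le hz.1) (by
        have := hz.2; linarith [hx1])).continuousWithinAt
    · intro z hz
      rw [interior_Icc] at hz
      obtain ⟨hz1, hz2⟩ := hz
      have hz0 : 0 < z := lt_trans hy₁0 hz1
      have hzlt1 : z < 1 := by linarith [hx1]
      rw [(hFderiv z hz0 hzlt1).deriv, hFderiv_sign z hz0 hzlt1]
      have hmz : β < m z := by
        rcases le_or_gt z c with h | h
        · rw [← hy₁]
          exact hm_mono ⟨hy₁0.le, hy₁c.le⟩ ⟨hz0.le, h⟩ hz1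
        · rw [← hmx]
          exact hm_anti ⟨h.le, by linarith⟩ ⟨hcx.le, hx1.le⟩ hz2
      exact div_neg_of_neg_of_pos (by linarith) (by linarith)
  have hF_mono2 : StrictMonoOn F (Set.Ico x 1) := by
    apply strictMonoOn_of_deriv_pos (convex_Ico x 1)
    · exact fun z hz => (hFc z (le_trans hx0.le hz.1) hz.2).continuousWithinAt
    · intro z hz
      rw [interior_Ico] at hz
      obtain ⟨hz1, hz2⟩ := hz
      have hz0 : 0 < z := lt_trans hx0 hz1
      rw [(hFderiv z hz0 hz2).deriv, hFderiv_sign z hz0 hz2]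
      have hmz : m z < β := by
        rw [← hmx]
        exact hm_anti ⟨hcx.le, hx1.le⟩ ⟨by linarith [hcx], hz2.le⟩ hz1
      exact div_pos (by linarith) (by linarith)
  have key : 0 < y → y ≠ x → 0 < F y := by
    intro hy hyx
    rcases le_or_gt y y₁ with h | h
    · have := hF_mono1 (Set.left_mem_Icc.2 hy₁0.le) ⟨hy0, h⟩ hy
      rw [hF0] at this; exact this
    · rcases lt_trichotomy y x with h2 | h2 | h2
      · have := hF_anti ⟨h.le, h2.le⟩ (Set.right_mem_Icc.2 hy₁x.le) h2
        rw [hFx] at this; exact this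
      · exact absurd h2 hyx
      · have := hF_mono2 (Set.left_mem_Ico.2 hx1) ⟨h2.le, hy1⟩ h2
        rw [hFx] at this; exact this
  constructor
  · rcases eq_or_lt_of_le hy0 with h | h
    · rw [← h, Real.zero_rpow ha0.ne']
      simp only [sub_zero, Real.log_one, neg_zero, mul_zero, le_refl]
    · rcases eq_or_ne y x with h2 | h2
      · subst h2
        have h3 : β * (-Real.log (1-y)) - y^a = 0 := hFx
        linarith
      · have h3 : 0 < β * (-Real.log (1-y)) - y^a := key h h2
        linarith
  · intro h1 h2
    have h3 : 0 < β * (-Real.log (1-y)) - y^a := key h1 h2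
    linarith

lemma consts {εK εN : ℝ} (hεK : 0 < εK) (hεN : 0 < εN)
    (hnt : 1 < Real.exp (-εK) + Real.exp (-εN)) :
    0 < Real.exp (-εK) ∧ Real.exp (-εK) < 1 ∧ 0 < -Real.log (1 - Real.exp (-εK)) ∧
      εN < -Real.log (1 - Real.exp (-εK)) := by
  set x := Real.exp (-εK) with hx
  have hx0 : 0 < x := Real.exp_pos _
  have hx1 : x < 1 := by
    rw [hx, Real.exp_lt_one_iff]; linarith
  have h1x : 0 < 1 - x := by linarith
  refine ⟨hx0, hx1, ?_, ?_⟩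
  · exact neg_pos.2 (Real.log_neg h1x (by linarith))
  · have h2 : 1 - x < Real.exp (-εN) := by linarith
    have h3 : Real.log (1 - x) < Real.log (Real.exp (-εN)) :=
      Real.log_lt_log h1x h2
    rw [Real.log_exp] at h3
    linarith

/-! ### measure-theoretic helpers -/

lemma integrable_dirac' {f : I01 → ℝ} (a : I01) : Integrable f (Measure.dirac a) := by
  refine (integrable_const (f a)).congr ?_
  rw [ae_dirac_eq]
  exact Filter.eventually_pure.2 rfl

lemma constraint_facts {g : I01 → ℝ} (hgm : Measurable g) (hg0 : ∀ y, 0 ≤ g y)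
    {S : Set I01} (hS : MeasurableSet S) {d : I01 → ℝ≥0∞}
    (hd : ∀ y, y ∉ S → d y = ENNReal.ofReal (g y)) (hdS : ∀ y ∈ S, d y = ⊤)
    {μ : Measure I01} {ε : ℝ} (hε : 0 ≤ ε) (h : ∫⁻ y, d y ∂μ ≤ ENNReal.ofReal ε) :
    μ S = 0 ∧ Integrable g μ ∧ ∫ y, g y ∂μ ≤ ε ∧
      ∫⁻ y, ENNReal.ofReal (g y) ∂μ ≤ ENNReal.ofReal ε := by
  have hSnull : μ S = 0 := by
    by_contra hne
    have h1 : ∫⁻ y in S, d y ∂μ = ⊤ * μ S := by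
      rw [setLIntegral_congr_fun hS hdS]
      exact setLIntegral_const S ⊤
    have h2 : ∫⁻ y in S, d y ∂μ ≤ ENNReal.ofReal ε := le_trans (setLIntegral_le_lintegral _ _) h
    rw [h1, ENNReal.top_mul hne] at h2
    exact (lt_irrefl _ (lt_of_le_of_lt h2 ENNReal.ofReal_lt_top)).elim
  have hae : d =ᵐ[μ] fun y => ENNReal.ofReal (g y) := by
    refine measure_mono_null ?_ hSnull
    intro y hy
    by_contra hyS
    exact hy (hd y hyS)
  have hlin : ∫⁻ y, ENNReal.ofReal (g y) ∂μ ≤ ENNReal.ofReal ε := by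
    rw [← lintegral_congr_ae hae]; exact h
  have hint : Integrable g μ := by
    constructor
    · exact hgm.aestronglyMeasurable
    · rw [hasFiniteIntegral_iff_ofReal (ae_of_all _ hg0)]
      exact lt_of_le_of_lt hlin ENNReal.ofReal_lt_top
  refine ⟨hSnull, hint, ?_, hlin⟩
  rw [integral_eq_lintegral_of_nonneg_ae (ae_of_all _ hg0) hgm.aestronglyMeasurable]
  exact ENNReal.toReal_le_of_le_ofReal hε hlin

lemma two_point (μ : Measure I01) (z x : I01) (hzx : z ≠ x)
    (hnull : μ (({z, x} : Set I01)ᶜ) = 0) :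
    μ = (μ {z}) • Measure.dirac z + (μ {x}) • Measure.dirac x := by
  ext s hs
  have hA : MeasurableSet ({z, x} : Set I01) :=
    (measurableSet_singleton z).union (measurableSet_singleton x)
  have h1 : μ (s ∩ {z, x}) + μ (s \ {z, x}) = μ s := measure_inter_add_diff s hA
  have h2 : μ (s \ {z, x}) = 0 :=
    measure_mono_null (fun y hy => hy.2) hnull
  have h3 : μ s = μ (s ∩ {z, x}) := by rw [← h1, h2, add_zero]
  have h4 : s ∩ ({z, x} : Set I01) = (s ∩ {z}) ∪ (s ∩ {x}) := by
    rw [Set.insert_eq, Set.inter_union_distrib_left]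
  have h5 : μ (s ∩ {z, x}) = μ (s ∩ {z}) + μ (s ∩ {x}) := by
    rw [h4]
    apply measure_union
    · exact Set.disjoint_of_subset Set.inter_subset_right Set.inter_subset_right
        (Set.disjoint_singleton.2 hzx)
    · exact hs.inter (measurableSet_singleton x)
  have hsing : ∀ w : I01, μ (s ∩ {w}) = μ {w} * (Measure.dirac w) s := by
    intro w
    rw [Measure.dirac_apply' w hs]
    by_cases hw : w ∈ s
    · rw [Set.inter_eq_self_of_subset_right (Set.singleton_subset_iff.2 hw)]
      simp [hw]
    · have : s ∩ ({w} : Set I01) = ∅ := by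
        ext u; simp only [Set.mem_inter_iff, Set.mem_singleton_iff, Set.mem_empty_iff_false,
          iff_false, not_and]
        rintro hu rfl; exact hw hu
      rw [this]
      simp [hw]
  rw [Measure.add_apply, Measure.smul_apply, Measure.smul_apply, smul_eq_mul, smul_eq_mul,
    h3, h5, hsing z, hsing x]

lemma main_bound (εK εN : ℝ) (hεK : 0 < εK) (hεN : 0 < εN)
    (hnt : 1 < Real.exp (-εK) + Real.exp (-εN))
    (xstar : I01) (hxstar : (xstar : ℝ) = Real.exp (-εK))
    (qstar : ℝ) (hqstar : qstar = εN / (-Real.log (1 - Real.exp (-εK))))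
    (zero01 : I01) (hzero : (zero01 : ℝ) = 0)
    (μK μN : Measure I01) (hPK : IsProbabilityMeasure μK) (hPN : IsProbabilityMeasure μN)
    (hcK : (∫⁻ y, dLogK y ∂μK) ≤ ENNReal.ofReal εK)
    (hcN : (∫⁻ y, dLogN y ∂μN) ≤ ENNReal.ofReal εN)
    (hac : μK ≪ μN)
    (hint : Integrable (fun y => Real.logb 2 ((μK.rnDeriv μN y).toReal)) μK) :
    -Real.logb 2 qstar ≤ ∫ y, Real.logb 2 ((μK.rnDeriv μN y).toReal) ∂μK ∧
    ((∫ y, Real.logb 2 ((μK.rnDeriv μN y).toReal) ∂μK) = -Real.logb 2 qstar →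
      μK = Measure.dirac xstar ∧
      μN = (ENNReal.ofReal (1 - qstar)) • Measure.dirac zero01
        + (ENNReal.ofReal qstar) • Measure.dirac xstar) := by
  haveI := hPK; haveI := hPN
  obtain ⟨hx0, hx1, ht0, htN⟩ := consts hεK hεN hnt
  set x := Real.exp (-εK) with hxdef
  set t := -Real.log (1 - x) with htdef
  have hqt : qstar = εN / t := hqstar
  have hq0 : 0 < qstar := by rw [hqt]; positivity
  have hq1 : qstar < 1 := by rw [hqt, div_lt_one ht0]; exact htN
  set q := qstar with hqdef
  set a := x / ((1-x)*t) with hadef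
  have ha0 : 0 < a := div_pos hx0 (mul_pos (by linarith) ht0)
  set β := x^a/t with hβdef
  have hxa0 : 0 < x^a := Real.rpow_pos_of_pos hx0 a
  have hβ0 : 0 < β := div_pos hxa0 ht0
  set θ := β * εN with hθdef
  have hθq : θ = x^a * q := by rw [hθdef, hβdef, hqt]; ring
  have hθ0 : 0 < θ := mul_pos hβ0 hεN
  have hlogθ : Real.log θ = -(a*εK) + Real.log q := by
    rw [hθq, Real.log_mul hxa0.ne' hq0.ne', Real.log_rpow hx0, hxdef, Real.log_exp]
    ring
  -- measurability of coordinate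
  have hval : Measurable (fun y : I01 => (y:ℝ)) := measurable_subtype_coe
  -- constraint facts for μK
  have hgKm : Measurable (fun y : I01 => -Real.log (y:ℝ)) := (Real.measurable_log.comp hval).neg
  have hgK0 : ∀ y : I01, 0 ≤ -Real.log (y:ℝ) := fun y =>
    neg_nonneg.2 (Real.log_nonpos y.2.1 y.2.2)
  have hSKm : MeasurableSet {y : I01 | (y:ℝ) = 0} := hval (measurableSet_singleton 0)
  obtain ⟨hK0, hKint, hKle, _⟩ := constraint_facts hgKm hgK0 hSKm
    (fun y hy => by have hy' : ¬((y:ℝ) = 0) := hy; simp only [dLogK]; rw [if_neg hy'])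
    (fun y hy => by have hy' : ((y:ℝ) = 0) := hy; simp only [dLogK]; rw [if_pos hy']) hεK.le hcK
  -- constraint facts for μN
  have hgNm : Measurable (fun y : I01 => -Real.log (1 - (y:ℝ))) :=
    (Real.measurable_log.comp (measurable_const.sub hval)).neg
  have hgN0 : ∀ y : I01, 0 ≤ -Real.log (1 - (y:ℝ)) := fun y =>
    neg_nonneg.2 (Real.log_nonpos (by linarith [y.2.2]) (by linarith [y.2.1]))
  have hSNm : MeasurableSet {y : I01 | (y:ℝ) = 1} := hval (measurableSet_singleton 1)
  obtain ⟨hN1, hNint, hNle, _⟩ := constraint_facts hgNm hgN0 hSNm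
    (fun y hy => by have hy' : ¬((y:ℝ) = 1) := hy; simp only [dLogN]; rw [if_neg hy'])
    (fun y hy => by have hy' : ((y:ℝ) = 1) := hy; simp only [dLogN]; rw [if_pos hy']) hεN.le hcN
  -- a.e. facts
  have haeK0 : ∀ᵐ (y : I01) ∂μK, 0 < (y:ℝ) := by
    have h1 : ∀ᵐ (y : I01) ∂μK, ¬ ((y:ℝ) = 0) := by
      rw [ae_iff]; simpa using hK0
    filter_upwards [h1] with y hy
    exact lt_of_le_of_ne y.2.1 (Ne.symm hy)
  have haeN1 : ∀ᵐ (y : I01) ∂μN, (y:ℝ) < 1 := by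
    have h1 : ∀ᵐ (y : I01) ∂μN, ¬ ((y:ℝ) = 1) := by
      rw [ae_iff]; simpa using hN1
    filter_upwards [h1] with y hy
    exact lt_of_le_of_ne y.2.2 hy
  -- the function P
  set P := fun y : I01 => ((y:ℝ))^a with hPdef
  have hPm : Measurable P := (Real.continuous_rpow_const ha0.le).measurable.comp hval
  have hP0 : ∀ y, 0 ≤ P y := fun y => Real.rpow_nonneg y.2.1 a
  have hP1 : ∀ y, P y ≤ 1 := fun y => Real.rpow_le_one y.2.1 y.2.2 ha0.le
  have hPint : Integrable P μN := by
    refine (integrable_const (1:ℝ)).mono' hPm.aestronglyMeasurable ?_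
    refine ae_of_all _ fun y => ?_
    rw [Real.norm_eq_abs, abs_of_nonneg (hP0 y)]; exact hP1 y
  have hchord : ∀ y : I01, (y:ℝ) < 1 →
      P y ≤ β * (-Real.log (1 - (y:ℝ))) ∧
        (0 < (y:ℝ) → (y:ℝ) ≠ x → P y < β * (-Real.log (1-(y:ℝ)))) :=
    fun y hy => chord x t a β hx0 hx1 htdef hadef hβdef y.2.1 hy
  have hPle : ∫ y, P y ∂μN ≤ θ := by
    have h1 : ∫ y, P y ∂μN ≤ ∫ y, β * (-Real.log (1-(y:ℝ))) ∂μN := by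
      apply integral_mono_ae hPint (hNint.const_mul β)
      filter_upwards [haeN1] with y hy
      exact (hchord y hy).1
    rw [integral_const_mul] at h1
    have h2 : β * ∫ y, -Real.log (1-(y:ℝ)) ∂μN ≤ β * εN :=
      mul_le_mul_of_nonneg_left hNle hβ0.le
    rw [hθdef]; linarith
  -- rnDeriv and the function Q
  set ρ := fun y : I01 => (μK.rnDeriv μN y).toReal with hρdef
  have hρm : Measurable ρ := (μK.measurable_rnDeriv μN).ennreal_toReal
  set Q := fun y : I01 => P y / ρ y with hQdef
  have hQm : Measurable Q := hPm.div hρm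
  have hQ0 : ∀ y, 0 ≤ Q y := fun y => div_nonneg (hP0 y) ENNReal.toReal_nonneg
  set MN := ∫⁻ y, ENNReal.ofReal (P y) ∂μN with hMN
  have hMNle : MN ≤ 1 := by
    calc MN ≤ ∫⁻ _, 1 ∂μN := lintegral_mono fun y => ENNReal.ofReal_le_one.2 (hP1 y)
    _ = 1 := by rw [lintegral_one, measure_univ]
  have hMNtop : MN ≠ ⊤ := (lt_of_le_of_lt hMNle ENNReal.one_lt_top).ne
  have hMNtoReal : MN.toReal = ∫ y, P y ∂μN :=
    (integral_eq_lintegral_of_nonneg_ae (ae_of_all _ hP0) hPm.aestronglyMeasurable).symm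
  set LQ := ∫⁻ y, ENNReal.ofReal (Q y) ∂μK with hLQ
  have hLQle : LQ ≤ MN := by
    have hwd : μN.withDensity (μK.rnDeriv μN) = μK := Measure.withDensity_rnDeriv_eq μK μN hac
    rw [hLQ, ← hwd, lintegral_withDensity_eq_lintegral_mul₀
      (μK.measurable_rnDeriv μN).aemeasurable
      (hQm.ennreal_ofReal.aemeasurable)]
    apply lintegral_mono_ae
    filter_upwards [Measure.rnDeriv_lt_top μK μN] with y hy
    simp only [Pi.mul_apply]
    rcases eq_or_ne (μK.rnDeriv μN y) 0 with h0 | h0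
    · rw [h0, zero_mul]; exact zero_le
    · have hρpos : 0 < ρ y := ENNReal.toReal_pos h0 hy.ne
      have hrd : μK.rnDeriv μN y = ENNReal.ofReal (ρ y) := (ENNReal.ofReal_toReal hy.ne).symm
      rw [hrd, ← ENNReal.ofReal_mul ENNReal.toReal_nonneg]
      apply le_of_eq; congr 1
      show ρ y * (P y / ρ y) = P y
      field_simp
  have hLQtop : LQ ≠ ⊤ := (lt_of_le_of_lt (le_trans hLQle hMNle) ENNReal.one_lt_top).ne
  have hQint : Integrable Q μK := by
    constructor
    · exact hQm.aestronglyMeasurable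
    · rw [hasFiniteIntegral_iff_ofReal (ae_of_all _ hQ0)]
      exact lt_of_le_of_lt (le_trans hLQle hMNle) ENNReal.one_lt_top
  have hQint_eq : ∫ y, Q y ∂μK = LQ.toReal :=
    integral_eq_lintegral_of_nonneg_ae (ae_of_all _ hQ0) hQm.aestronglyMeasurable
  have hQle : ∫ y, Q y ∂μK ≤ θ := by
    rw [hQint_eq]
    calc LQ.toReal ≤ MN.toReal := ENNReal.toReal_mono hMNtop hLQle
      _ = ∫ y, P y ∂μN := hMNtoReal
      _ ≤ θ := hPle
  -- L and W
  set L := fun y : I01 => Real.log (ρ y) with hLdef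
  have hlog2 : (0:ℝ) < Real.log 2 := Real.log_pos one_lt_two
  have hLint : Integrable L μK := by
    have h1 := hint.const_mul (Real.log 2)
    refine h1.congr (ae_of_all _ fun y => ?_)
    show Real.log 2 * Real.logb 2 (ρ y) = Real.log (ρ y)
    rw [Real.logb]
    field_simp
  have hlogKint : Integrable (fun y : I01 => Real.log (y:ℝ)) μK := by
    have h : (fun y : I01 => Real.log (y:ℝ)) = fun y : I01 => -(-Real.log (y:ℝ)) := by
      funext y; ring
    rw [h]; exact hKint.neg
  set W := fun y : I01 => a * Real.log (y:ℝ) - Real.log θ - Q y / θ + 1 with hWdef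
  have hWint : Integrable W μK :=
    (((hlogKint.const_mul a).sub (integrable_const (Real.log θ))).sub
      (hQint.div_const θ)).add (integrable_const 1)
  have hWL : ∀ᵐ y ∂μK, W y ≤ L y := by
    filter_upwards [haeK0, Measure.rnDeriv_pos hac,
      (Measure.rnDeriv_lt_top μK μN).filter_mono hac.ae_le] with y hy0 hpos htop
    have hρpos : 0 < ρ y := ENNReal.toReal_pos hpos.ne' htop.ne
    have hPpos : 0 < P y := Real.rpow_pos_of_pos hy0 a
    have hwpos : 0 < P y / (ρ y * θ) := by positivity
    have hlog := Real.log_le_sub_one_of_pos hwpos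
    rw [Real.log_div hPpos.ne' (by positivity), Real.log_mul hρpos.ne' hθ0.ne'] at hlog
    have hlogP : Real.log (P y) = a * Real.log (y:ℝ) := Real.log_rpow hy0 a
    show a * Real.log (y:ℝ) - Real.log θ - Q y / θ + 1 ≤ Real.log (ρ y)
    have hQy : Q y / θ = P y / (ρ y * θ) := by
      show (P y / ρ y) / θ = P y / (ρ y * θ)
      rw [div_div]
    rw [hQy]
    linarith
  have hWeval : ∫ y, W y ∂μK
      = a * (∫ y, Real.log (y:ℝ) ∂μK) - Real.log θ - (∫ y, Q y ∂μK)/θ + 1 := by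
    have hf1 : Integrable (fun y : I01 => a * Real.log (y:ℝ) - Real.log θ) μK :=
      (hlogKint.const_mul a).sub (integrable_const (Real.log θ))
    have hf2 : Integrable (fun y : I01 => a * Real.log (y:ℝ) - Real.log θ - Q y / θ) μK :=
      hf1.sub (hQint.div_const θ)
    have e1 : ∫ y, W y ∂μK
        = (∫ y, (a * Real.log (y:ℝ) - Real.log θ - Q y / θ) ∂μK) + ∫ _, (1:ℝ) ∂μK :=
      integral_add hf2 (integrable_const 1)
    have e2 : ∫ y, (a * Real.log (y:ℝ) - Real.log θ - Q y / θ) ∂μK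
        = (∫ y, (a * Real.log (y:ℝ) - Real.log θ) ∂μK) - ∫ y, Q y / θ ∂μK :=
      integral_sub hf1 (hQint.div_const θ)
    have e3 : ∫ y, (a * Real.log (y:ℝ) - Real.log θ) ∂μK
        = (∫ y, a * Real.log (y:ℝ) ∂μK) - ∫ _, Real.log θ ∂μK :=
      integral_sub (hlogKint.const_mul a) (integrable_const (Real.log θ))
    rw [e1, e2, e3, integral_const_mul, integral_div, integral_const, integral_const]
    simp [measure_univ]
  have hlogK_ge : -εK ≤ ∫ y, Real.log (y:ℝ) ∂μK := by
    have h1 : ∫ y, Real.log (y:ℝ) ∂μK = -∫ y, -Real.log (y:ℝ) ∂μK := by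
      rw [← integral_neg]; simp
    rw [h1]; linarith [hKle]
  have h3 : -Real.log q = -(a*εK) - Real.log θ := by rw [hlogθ]; ring
  have hWge : -Real.log q ≤ ∫ y, W y ∂μK := by
    rw [hWeval]
    have h1 : (∫ y, Q y ∂μK)/θ ≤ 1 := (div_le_one hθ0).2 hQle
    have h2 : a * (-εK) ≤ a * ∫ y, Real.log (y:ℝ) ∂μK :=
      mul_le_mul_of_nonneg_left hlogK_ge ha0.le
    linarith
  have hWLe : ∫ y, W y ∂μK ≤ ∫ y, L y ∂μK := integral_mono_ae hWint hLint hWL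
  have hLge : -Real.log q ≤ ∫ y, L y ∂μK := le_trans hWge hWLe
  have hlogb_eq : ∫ y, Real.logb 2 ((μK.rnDeriv μN y).toReal) ∂μK
      = (∫ y, L y ∂μK) / Real.log 2 := by
    rw [← integral_div]
    rfl
  constructor
  · rw [hlogb_eq]
    rw [Real.logb, ← neg_div]
    exact (div_le_div_iff_of_pos_right hlog2).2 hLge
  · intro heq
    -- equality analysis
    have hLeq : ∫ y, L y ∂μK = -Real.log q := by
      rw [hlogb_eq, Real.logb, ← neg_div] at heq
      have h4 := congrArg (fun z => z * Real.log 2) heq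
      simpa [div_mul_cancel₀, hlog2.ne'] using h4
    have hWeq : ∫ y, W y ∂μK = -Real.log q := le_antisymm (hLeq ▸ hWLe) hWge
    have hQeq : ∫ y, Q y ∂μK = θ := by
      rw [hWeval] at hWeq
      have h5 : 0 ≤ a * (∫ y, Real.log (y:ℝ) ∂μK) + a * εK := by
        have h := mul_nonneg ha0.le (show (0:ℝ) ≤ (∫ y, Real.log (y:ℝ) ∂μK) + εK by linarith)
        rw [mul_add] at h; exact h
      have h6 : 0 ≤ 1 - (∫ y, Q y ∂μK)/θ := by linarith [(div_le_one hθ0).2 hQle]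
      have h7 : (∫ y, Q y ∂μK)/θ = 1 := by linarith
      rw [div_eq_one_iff_eq hθ0.ne'] at h7
      exact h7
    have hPeq : ∫ y, P y ∂μN = θ := by
      refine le_antisymm hPle ?_
      calc θ = ∫ y, Q y ∂μK := hQeq.symm
        _ = LQ.toReal := hQint_eq
        _ ≤ MN.toReal := ENNReal.toReal_mono hMNtop hLQle
        _ = ∫ y, P y ∂μN := hMNtoReal
    -- μN analysis
    have hZ0 : 0 ≤ᵐ[μN] fun y : I01 => β * (-Real.log (1-(y:ℝ))) - P y := by
      filter_upwards [haeN1] with y hy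
      exact sub_nonneg.2 (hchord y hy).1
    have hZint : Integrable (fun y : I01 => β * (-Real.log (1-(y:ℝ))) - P y) μN :=
      (hNint.const_mul β).sub hPint
    have hZeval : ∫ y, (β * (-Real.log (1-(y:ℝ))) - P y) ∂μN
        = β * (∫ y, -Real.log (1-(y:ℝ)) ∂μN) - θ := by
      rw [integral_sub (hNint.const_mul β) hPint, integral_const_mul, hPeq]
    have hZle : ∫ y, (β * (-Real.log (1-(y:ℝ))) - P y) ∂μN ≤ 0 := by
      rw [hZeval, hθdef]
      have := mul_le_mul_of_nonneg_left hNle hβ0.le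
      linarith
    have hZzero : ∫ y, (β * (-Real.log (1-(y:ℝ))) - P y) ∂μN = 0 :=
      le_antisymm hZle (integral_nonneg_of_ae hZ0)
    have hgNeq : ∫ y, -Real.log (1-(y:ℝ)) ∂μN = εN := by
      have h1 : β * (∫ y, -Real.log (1-(y:ℝ)) ∂μN) - θ = 0 := by
        rw [← hZeval, hZzero]
      have h2 : β * (∫ y, -Real.log (1-(y:ℝ)) ∂μN) = β * εN := by
        rw [hθdef] at h1; linarith
      exact mul_left_cancel₀ hβ0.ne' h2
    have haeZ : ∀ᵐ (y : I01) ∂μN, β * (-Real.log (1-(y:ℝ))) - P y = 0 :=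
      (integral_eq_zero_iff_of_nonneg_ae hZ0 hZint).1 hZzero
    have hzx : zero01 ≠ xstar := by
      intro h
      rw [← hxstar, ← h, hzero] at hx0
      exact lt_irrefl _ hx0
    have hae2 : ∀ᵐ y ∂μN, y ∈ ({zero01, xstar} : Set I01) := by
      filter_upwards [haeN1, haeZ] with y hy1 hy2
      rcases eq_or_lt_of_le (y.2.1) with h0 | h0
      · left; exact Subtype.ext (by rw [hzero, ← h0])
      · right
        by_contra hne
        have hnex : (y:ℝ) ≠ x := by
          intro h
          exact hne (Subtype.ext (by rw [hxstar, h]))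
        have := (hchord y hy1).2 h0 hnex
        simp only [Set.mem_singleton_iff] at hne
        linarith
    have hNsupp : μN (({zero01, xstar} : Set I01)ᶜ) = 0 := ae_iff.mp hae2
    have hNrep := two_point μN zero01 xstar hzx hNsupp
    have hγfin : μN {xstar} ≠ ⊤ := measure_ne_top μN _
    have hαfin : μN {zero01} ≠ ⊤ := measure_ne_top μN _
    have hInt1 : ∫ y, -Real.log (1-(y:ℝ)) ∂μN = (μN {xstar}).toReal * t := by
      nth_rewrite 1 [hNrep]
      rw [integral_add_measure ((integrable_dirac' zero01).smul_measure hαfin)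
            ((integrable_dirac' xstar).smul_measure hγfin),
          integral_smul_measure, integral_smul_measure, integral_dirac, integral_dirac,
          hzero, hxstar]
      rw [← htdef]
      simp
    have hγ : μN {xstar} = ENNReal.ofReal q := by
      have h1 : (μN {xstar}).toReal * t = εN := by rw [← hInt1]; exact hgNeq
      have h2 : (μN {xstar}).toReal = q := by
        rw [hqt, eq_div_iff ht0.ne']
        exact h1
      rw [← h2, ENNReal.ofReal_toReal hγfin]
    have hα : μN {zero01} = ENNReal.ofReal (1-q) := by
      have huniv : μN Set.univ = 1 := measure_univ
      nth_rewrite 1 [hNrep] at huniv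
      rw [Measure.add_apply, Measure.smul_apply, Measure.smul_apply,
        Measure.dirac_apply_of_mem (Set.mem_univ _),
        Measure.dirac_apply_of_mem (Set.mem_univ _), smul_eq_mul, smul_eq_mul,
        mul_one, mul_one, hγ] at huniv
      have h2 : ENNReal.ofReal (1-q) + ENNReal.ofReal q = 1 := by
        rw [← ENNReal.ofReal_add (by linarith) hq0.le]
        norm_num
      exact (ENNReal.add_left_inj ENNReal.ofReal_ne_top).1 (huniv.trans h2.symm)
    -- μK analysis
    have hKsupp : μK (({zero01, xstar} : Set I01)ᶜ) = 0 := hac hNsupp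
    have hKz : μK {zero01} = 0 := by
      refine measure_mono_null ?_ hK0
      intro u hu
      rw [Set.mem_singleton_iff] at hu
      show (u:ℝ) = 0
      rw [hu, hzero]
    have hKrep := two_point μK zero01 xstar hzx hKsupp
    have hKx : μK {xstar} = 1 := by
      have huniv : μK Set.univ = 1 := measure_univ
      nth_rewrite 1 [hKrep] at huniv
      rw [Measure.add_apply, Measure.smul_apply, Measure.smul_apply,
        Measure.dirac_apply_of_mem (Set.mem_univ _),
        Measure.dirac_apply_of_mem (Set.mem_univ _), smul_eq_mul, smul_eq_mul,
        mul_one, mul_one, hKz, zero_add] at huniv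
      exact huniv
    constructor
    · rw [hKrep, hKz, hKx, zero_smul, zero_add, one_smul]
    · rw [hNrep, hα, hγ]

lemma star_facts (εK εN : ℝ) (hεK : 0 < εK) (hεN : 0 < εN)
    (hnt : 1 < Real.exp (-εK) + Real.exp (-εN))
    (xstar : I01) (hxstar : (xstar : ℝ) = Real.exp (-εK))
    (qstar : ℝ) (hqstar : qstar = εN / (-Real.log (1 - Real.exp (-εK))))
    (zero01 : I01) (hzero : (zero01 : ℝ) = 0)
    (μKs μNs : Measure I01)
    (hμKs : μKs = Measure.dirac xstar)
    (hμNs : μNs = (ENNReal.ofReal (1 - qstar)) • Measure.dirac zero01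
        + (ENNReal.ofReal qstar) • Measure.dirac xstar) :
    FeasLog εK εN μKs μNs ∧ klDiv2 μKs μNs = ((-Real.logb 2 qstar : ℝ) : EReal) := by
  obtain ⟨hx0, hx1, ht0, htN⟩ := consts hεK hεN hnt
  set x := Real.exp (-εK) with hxdef
  set t := -Real.log (1 - x) with htdef
  have hqt : qstar = εN / t := hqstar
  have hq0 : 0 < qstar := by rw [hqt]; positivity
  have hq1 : qstar < 1 := by rw [hqt, div_lt_one ht0]; exact htN
  have hzx : zero01 ≠ xstar := by
    intro h; rw [← hxstar, ← h, hzero] at hx0; exact lt_irrefl _ hx0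
  have hxne0 : (xstar : ℝ) ≠ 0 := by rw [hxstar]; exact hx0.ne'
  have hxne1 : (xstar : ℝ) ≠ 1 := by rw [hxstar]; exact hx1.ne
  haveI hPK : IsProbabilityMeasure μKs := by rw [hμKs]; infer_instance
  have hμNsuniv : μNs Set.univ = 1 := by
    rw [hμNs, Measure.add_apply, Measure.smul_apply, Measure.smul_apply,
      Measure.dirac_apply_of_mem (Set.mem_univ _), Measure.dirac_apply_of_mem (Set.mem_univ _),
      smul_eq_mul, smul_eq_mul, mul_one, mul_one,
      ← ENNReal.ofReal_add (by linarith) hq0.le]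
    norm_num
  haveI hPN : IsProbabilityMeasure μNs := ⟨hμNsuniv⟩
  -- measure of singleton xstar under μNs
  have hmem : ∀ u : Set I01, MeasurableSet u →
      μNs (({xstar} : Set I01) ∩ u) = (ENNReal.ofReal qstar) * (Measure.dirac xstar u) := by
    intro u hu
    by_cases hxs : xstar ∈ u
    · have h1 : (({xstar} : Set I01) ∩ u) = {xstar} :=
        Set.inter_eq_self_of_subset_left (Set.singleton_subset_iff.2 hxs)
      rw [h1, hμNs, Measure.add_apply, Measure.smul_apply, Measure.smul_apply,
        Measure.dirac_apply' _ (measurableSet_singleton _),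
        Measure.dirac_apply' _ (measurableSet_singleton _),
        Measure.dirac_apply_of_mem hxs]
      rw [Set.indicator_of_notMem (by simpa using hzx),
        Set.indicator_of_mem (Set.mem_singleton _)]
      simp
    · have h1 : (({xstar} : Set I01) ∩ u) = ∅ := by
        ext v
        simp only [Set.mem_inter_iff, Set.mem_singleton_iff, Set.mem_empty_iff_false, iff_false,
          not_and]
        rintro rfl; exact hxs
      rw [h1, Measure.dirac_apply' _ hu, Set.indicator_of_notMem hxs]
      simp
  have hNsx : μNs {xstar} = ENNReal.ofReal qstar := by
    have := hmem {xstar} (measurableSet_singleton _)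
    rw [Set.inter_self, Measure.dirac_apply_of_mem (Set.mem_singleton _), mul_one] at this
    exact this
  have hqne : ENNReal.ofReal qstar ≠ 0 := by
    simp [ENNReal.ofReal_eq_zero]; linarith
  -- withDensity representation
  set c : ℝ≥0∞ := (ENNReal.ofReal qstar)⁻¹ with hcdef
  set f : I01 → ℝ≥0∞ := ({xstar} : Set I01).indicator (fun _ => c) with hfdef
  have hfm : Measurable f := measurable_const.indicator (measurableSet_singleton _)
  have hwd : μNs.withDensity f = Measure.dirac xstar := by
    ext s hs
    rw [withDensity_apply _ hs, hfdef]
    rw [lintegral_indicator_const (measurableSet_singleton xstar),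
      Measure.restrict_apply (measurableSet_singleton xstar), hmem s hs]
    rw [← mul_assoc, hcdef, ENNReal.inv_mul_cancel hqne ENNReal.ofReal_ne_top, one_mul]
  have hacs : μKs ≪ μNs := by
    rw [hμKs, ← hwd]; exact withDensity_absolutelyContinuous μNs f
  have hrn : (Measure.dirac xstar).rnDeriv μNs =ᵐ[μNs] f := by
    rw [← hwd]; exact Measure.rnDeriv_withDensity μNs hfm
  have hrnx : (Measure.dirac xstar).rnDeriv μNs xstar = c := by
    by_contra hne
    have hsub : ({xstar} : Set I01) ⊆ {y | ¬ ((Measure.dirac xstar).rnDeriv μNs y = f y)} := by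
      intro u hu
      rw [Set.mem_singleton_iff] at hu; subst hu
      simp only [Set.mem_setOf_eq]
      rw [hfdef, Set.indicator_of_mem (Set.mem_singleton _)]
      exact hne
    have h0 : μNs {xstar} = 0 := measure_mono_null hsub (ae_iff.mp hrn)
    rw [hNsx] at h0
    exact hqne h0
  have hint2 : Integrable (fun y => Real.logb 2 ((μKs.rnDeriv μNs y).toReal)) μKs := by
    rw [hμKs]; exact integrable_dirac' xstar
  have hval2 : ∫ y, Real.logb 2 ((μKs.rnDeriv μNs y).toReal) ∂μKs = -Real.logb 2 qstar := by
    rw [hμKs, integral_dirac, hrnx, hcdef, ENNReal.toReal_inv, ENNReal.toReal_ofReal hq0.le,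
      Real.logb_inv]
  -- feasibility
  have hfK : (∫⁻ y, dLogK y ∂μKs) = ENNReal.ofReal εK := by
    rw [hμKs, lintegral_dirac]
    simp only [dLogK]
    rw [if_neg hxne0, hxstar, hxdef, Real.log_exp]
    norm_num
  have hdN0 : dLogN zero01 = 0 := by
    simp only [dLogN]
    rw [if_neg (by rw [hzero]; norm_num), hzero]
    norm_num
  have hdNx : dLogN xstar = ENNReal.ofReal t := by
    simp only [dLogN]
    rw [if_neg hxne1, hxstar, ← htdef]
  have hfN : (∫⁻ y, dLogN y ∂μNs) = ENNReal.ofReal εN := by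
    rw [hμNs, lintegral_add_measure, lintegral_smul_measure, lintegral_smul_measure,
      lintegral_dirac, lintegral_dirac, hdN0, hdNx]
    rw [smul_zero, zero_add, smul_eq_mul, ← ENNReal.ofReal_mul hq0.le]
    congr 1
    rw [hqt]; field_simp
  refine ⟨⟨hPK, hPN, le_of_eq hfK, le_of_eq hfN⟩, ?_⟩
  simp only [klDiv2]
  rw [if_pos ⟨hacs, hint2⟩, hval2]

theorem stmt_11 (εK εN : ℝ) (hεK : 0 < εK) (hεN : 0 < εN)
    (hnt : 1 < Real.exp (-εK) + Real.exp (-εN))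
    -- x* = e^{−εK} as an element of [0,1], and q* = εN / (−ln(1−x*))
    (xstar : I01) (hxstar : (xstar : ℝ) = Real.exp (-εK))
    (qstar : ℝ) (hqstar : qstar = εN / (-Real.log (1 - Real.exp (-εK))))
    (zero01 : I01) (hzero : (zero01 : ℝ) = 0)
    (μKs μNs : Measure I01)
    (hμKs : μKs = Measure.dirac xstar)
    (hμNs : μNs = (ENNReal.ofReal (1 - qstar)) • Measure.dirac zero01
        + (ENNReal.ofReal qstar) • Measure.dirac xstar) :
    -- (μK*, μN*) is feasible,
    FeasLog εK εN μKs μNs ∧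
    -- it minimizes KL(μK ‖ μN) over all feasible pairs,
    (∀ μK μN : Measure I01, FeasLog εK εN μK μN → klDiv2 μKs μNs ≤ klDiv2 μK μN) ∧
    -- and it is the unique minimizer
    (∀ μK μN : Measure I01, FeasLog εK εN μK μN →
      klDiv2 μK μN = klDiv2 μKs μNs → μK = μKs ∧ μN = μNs) := by
  obtain ⟨hfeas, hval⟩ := star_facts εK εN hεK hεN hnt xstar hxstar qstar hqstar zero01 hzero
    μKs μNs hμKs hμNs
  refine ⟨hfeas, ?_, ?_⟩
  · intro μK μN hf
    obtain ⟨hPK, hPN, hcK, hcN⟩ := hf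
    rw [hval]
    by_cases hc : μK ≪ μN ∧ Integrable (fun y => Real.logb 2 ((μK.rnDeriv μN y).toReal)) μK
    · have hb := (main_bound εK εN hεK hεN hnt xstar hxstar qstar hqstar zero01 hzero μK μN
        hPK hPN hcK hcN hc.1 hc.2).1
      simp only [klDiv2]
      rw [if_pos hc]
      exact EReal.coe_le_coe_iff.2 hb
    · simp only [klDiv2]
      rw [if_neg hc]
      exact le_top
  · intro μK μN hf heq
    obtain ⟨hPK, hPN, hcK, hcN⟩ := hf
    rw [hval] at heq
    by_cases hc : μK ≪ μN ∧ Integrable (fun y => Real.logb 2 ((μK.rnDeriv μN y).toReal)) μK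
    · have heq2 : ∫ y, Real.logb 2 ((μK.rnDeriv μN y).toReal) ∂μK = -Real.logb 2 qstar := by
        simp only [klDiv2] at heq
        rw [if_pos hc] at heq
        exact_mod_cast heq
      obtain ⟨h1, h2⟩ := (main_bound εK εN hεK hεN hnt xstar hxstar qstar hqstar zero01 hzero
        μK μN hPK hPN hcK hcN hc.1 hc.2).2 heq2
      exact ⟨by rw [hμKs]; exact h1, by rw [hμNs]; exact h2⟩
    · exfalso
      simp only [klDiv2] at heq
      rw [if_neg hc] at heq
      exact EReal.top_ne_coe (x := -Real.logb 2 qstar) heq
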